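/- With F and the normalization of the previous statement (coefficients of x^i y^{q1-1} all zero and coefficient of x^{q2-1} zero), suppose G is another polynomial of the same shape also satisfying the normalization, and suppose the substitution x ↦ α1 x + β, y ↦ α2 y + γ_0 + γ_1 x + ... + γ_s x^s (α1, α2 ≠ 0) maps the ideal (G) into the ideal (F) (i.e. transforms G into a scalar multiple of F). Then β = 0 and γ_0 = ... = γ_s = 0. -/

import Mathlib

open MvPolynomial

/-- Predicate: `F` is a plane Weierstrass polynomial in Tschirnhaus form for
coprime `q1 < q2`: top monomials `x^q2`, `y^q1` with nonzero coefficients, all other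
monomials strictly below the hypotenuse, all coefficients of `x^i y^(q1-1)` vanish,
and the coefficient of `x^(q2-1)` vanishes. -/
def TWform (q1 q2 : ℕ) (F : MvPolynomial (Fin 2) ℂ) : Prop :=
  F.coeff (Finsupp.single 0 q2) ≠ 0 ∧
  F.coeff (Finsupp.single 1 q1) ≠ 0 ∧
  (∀ d ∈ F.support, q1 * d 0 + q2 * d 1 ≤ q1 * q2 ∧
    (q1 * d 0 + q2 * d 1 = q1 * q2 →
      d = Finsupp.single 0 q2 ∨ d = Finsupp.single 1 q1)) ∧
  (∀ i : ℕ, F.coeff (Finsupp.single 0 i + Finsupp.single 1 (q1 - 1)) = 0) ∧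
  F.coeff (Finsupp.single 0 (q2 - 1)) = 0

noncomputable section

/-- binomial coefficient extraction -/
lemma tw_coeff_pow {R : Type*} [CommRing R] (a b : R) (n k : ℕ) :
    ((Polynomial.C a * Polynomial.X + Polynomial.C b) ^ n).coeff k
      = (n.choose k : R) * a ^ k * b ^ (n - k) := by
  rw [add_pow, Polynomial.finset_sum_coeff]
  have h : ∀ m ∈ Finset.range (n + 1),
      ((Polynomial.C a * Polynomial.X) ^ m * Polynomial.C b ^ (n - m) *
        ((n.choose m : ℕ) : Polynomial R)).coeff k
      = if k = m then (n.choose k : R) * a ^ k * b ^ (n - k) else 0 := by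
    intro m _
    rw [mul_pow, ← Polynomial.C_pow, ← Polynomial.C_pow, ← Polynomial.C_eq_natCast,
      Polynomial.coeff_mul_C, Polynomial.coeff_mul_C, Polynomial.coeff_C_mul,
      Polynomial.coeff_X_pow]
    by_cases hmk : k = m
    · subst hmk; simp [mul_comm, mul_assoc, mul_left_comm]
    · simp [hmk]
  rw [Finset.sum_congr rfl h, Finset.sum_ite_eq (Finset.range (n + 1)) k]
  split_ifs with hk
  · rfl
  · have : n < k := by simpa using hk
    rw [Nat.choose_eq_zero_of_lt this]; simp

/-- a Finsupp on Fin 2 is determined by its two values -/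
lemma tw_fin2_eq_iff (d : Fin 2 →₀ ℕ) (i j : ℕ) :
    d = Finsupp.single 0 i + Finsupp.single 1 j ↔ d 0 = i ∧ d 1 = j := by
  constructor
  · rintro rfl
    simp [Finsupp.single_apply]
  · rintro ⟨h0, h1⟩
    ext t
    fin_cases t <;> simp [Finsupp.single_apply, ← h0, ← h1]

/-- the iso to `ℂ[x][y]` -/
def Phi : MvPolynomial (Fin 2) ℂ →ₐ[ℂ] Polynomial (Polynomial ℂ) :=
  aeval ![Polynomial.C Polynomial.X, Polynomial.X]

lemma Phi_coeff (P : MvPolynomial (Fin 2) ℂ) (i j : ℕ) :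
    ((Phi P).coeff j).coeff i = P.coeff (Finsupp.single 0 i + Finsupp.single 1 j) := by
  induction P using MvPolynomial.induction_on' with
  | add p q hp hq => simp [map_add, Polynomial.coeff_add, MvPolynomial.coeff_add, hp, hq]
  | monomial d c =>
    rw [Phi, aeval_monomial, Finsupp.prod_fintype _ _ (fun _ => pow_zero _),
      Fin.prod_univ_two]
    simp only [Matrix.cons_val_zero, Matrix.cons_val_one, Matrix.head_cons]
    rw [show (algebraMap ℂ (Polynomial (Polynomial ℂ))) c = Polynomial.C (Polynomial.C c) from rfl,
      MvPolynomial.coeff_monomial]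
    simp only [tw_fin2_eq_iff]
    rw [show Polynomial.C (Polynomial.C c) * (Polynomial.C Polynomial.X ^ d 0 * Polynomial.X ^ d 1)
        = Polynomial.C (Polynomial.C c * Polynomial.X ^ d 0) * Polynomial.X ^ d 1 by
      rw [← Polynomial.C_pow, ← mul_assoc, ← Polynomial.C_mul],
      Polynomial.coeff_C_mul, Polynomial.coeff_X_pow]
    by_cases h1 : j = d 1
    · by_cases h0 : i = d 0
      · simp [h1, h0, Polynomial.coeff_C_mul, Polynomial.coeff_X_pow]
      · simp [h1, h0, Polynomial.coeff_C_mul, Polynomial.coeff_X_pow,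
          Ne.symm h0]
    · simp [h1, Ne.symm h1]

/-- Any affine-triangular substitution carrying one Tschirnhaus–Weierstrass form
into (the ideal of) another must be a pure scaling. -/
theorem stmt_9 (q1 q2 : ℕ) (hcop : Nat.Coprime q1 q2) (hq1 : 0 < q1) (hlt : q1 < q2)
    (s : ℕ) (hs : s = (q2 - 1) / q1)
    (F G : MvPolynomial (Fin 2) ℂ)
    (hF : TWform q1 q2 F) (hG : TWform q1 q2 G)
    (α1 α2 β : ℂ) (γ : Fin (s + 1) → ℂ) (hα1 : α1 ≠ 0) (hα2 : α2 ≠ 0)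
    (hmap : aeval ![C α1 * X 0 + C β,
              C α2 * X 1 + ∑ i : Fin (s + 1), C (γ i) * X 0 ^ (i : ℕ)] G ∈
            Ideal.span {F}) :
    β = 0 ∧ ∀ i, γ i = 0 := by
  classical
  obtain ⟨hGx, hGy, hGsup, hGy1, hGx1⟩ := hG
  obtain ⟨hFx, hFy, hFsup, hFy1, hFx1⟩ := hF
  set p : Polynomial ℂ := ∑ i : Fin (s+1), Polynomial.C (γ i) * Polynomial.X ^ (i:ℕ) with hpdef
  set q : Polynomial ℂ := Polynomial.C α1 * Polynomial.X + Polynomial.C β with hqdef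
  obtain ⟨h, hh⟩ := Ideal.mem_span_singleton'.mp hmap
  set K : Polynomial (Polynomial ℂ) := Phi (aeval ![C α1 * X 0 + C β,
      C α2 * X 1 + ∑ i : Fin (s + 1), C (γ i) * X 0 ^ (i : ℕ)] G) with hKdef
  have hK : K = Phi h * Phi F := by rw [hKdef, ← hh, map_mul]
  -- K computed through the substitution on the `ℂ[x][y]` side
  have hcomp : K = aeval ![Polynomial.C q,
      Polynomial.C (Polynomial.C α2) * Polynomial.X + Polynomial.C p] G := by
    rw [hKdef]
    have hΦσ : Phi.comp (aeval ![C α1 * X 0 + C β,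
        C α2 * X 1 + ∑ i : Fin (s + 1), C (γ i) * X 0 ^ (i : ℕ)])
        = aeval ![Polynomial.C q,
            Polynomial.C (Polynomial.C α2) * Polynomial.X + Polynomial.C p] := by
      apply MvPolynomial.algHom_ext
      intro i
      fin_cases i
      · simp [Phi, hqdef, map_add, map_mul]
      · simp [Phi, hpdef, map_add, map_mul, map_sum, map_pow]
    exact (DFunLike.congr_fun hΦσ G : _)
  -- coefficient formula for K
  have hKcoeff : ∀ k : ℕ, K.coeff k = ∑ d ∈ G.support,
      Polynomial.C (G.coeff d) * q ^ (d 0) * (((d 1).choose k : ℕ) : Polynomial ℂ) *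
        (Polynomial.C α2) ^ k * p ^ (d 1 - k) := by
    intro k
    rw [hcomp]
    conv_lhs => rw [← G.support_sum_monomial_coeff]
    rw [map_sum, Polynomial.finset_sum_coeff]
    refine Finset.sum_congr rfl fun d hd => ?_
    rw [aeval_monomial, Finsupp.prod_fintype _ _ (fun _ => pow_zero _), Fin.prod_univ_two]
    simp only [Matrix.cons_val_zero, Matrix.cons_val_one, Matrix.head_cons]
    rw [show (algebraMap ℂ (Polynomial (Polynomial ℂ))) (G.coeff d)
        = Polynomial.C (Polynomial.C (G.coeff d)) from rfl]
    rw [show Polynomial.C (Polynomial.C (G.coeff d)) * (Polynomial.C q ^ d 0 *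
          (Polynomial.C (Polynomial.C α2) * Polynomial.X + Polynomial.C p) ^ d 1)
        = Polynomial.C (Polynomial.C (G.coeff d) * q ^ d 0) *
          (Polynomial.C (Polynomial.C α2) * Polynomial.X + Polynomial.C p) ^ d 1 by
      rw [← Polynomial.C_pow, ← mul_assoc, ← Polynomial.C_mul]]
    rw [Polynomial.coeff_C_mul, tw_coeff_pow]
    ring
  -- support bounds for G
  have hd1le : ∀ d ∈ G.support, d 1 ≤ q1 := by
    intro d hd
    have h1 := (hGsup d hd).1
    have h2 : q2 * d 1 ≤ q2 * q1 := by nlinarith [Nat.zero_le (q1 * d 0)]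
    exact Nat.le_of_mul_le_mul_left h2 (by omega)
  have hd0le : ∀ d ∈ G.support, d 0 ≤ q2 := by
    intro d hd
    have h1 := (hGsup d hd).1
    have h2 : q1 * d 0 ≤ q1 * q2 := by nlinarith [Nat.zero_le (q2 * d 1)]
    exact Nat.le_of_mul_le_mul_left h2 hq1
  -- facts about Phi F
  have hFhi : ∀ j, q1 < j → (Phi F).coeff j = 0 := by
    intro j hj
    ext i
    rw [Phi_coeff]
    simp only [Polynomial.coeff_zero]
    by_contra hc
    have hmem : (Finsupp.single 0 i + Finsupp.single 1 j) ∈ F.support :=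
      MvPolynomial.mem_support_iff.mpr hc
    have h1 := (hFsup _ hmem).1
    have hj' : (Finsupp.single 0 i + Finsupp.single 1 j : Fin 2 →₀ ℕ) 1 = j := by
      simp [Finsupp.single_apply]
    rw [hj'] at h1
    have h2 : q2 * j ≤ q2 * q1 := by
      nlinarith [Nat.zero_le (q1 * ((Finsupp.single 0 i + Finsupp.single 1 j : Fin 2 →₀ ℕ) 0))]
    have := Nat.le_of_mul_le_mul_left h2 (by omega : 0 < q2)
    omega
  have hFq1ne : (Phi F).coeff q1 ≠ 0 := by
    intro h0
    have hpc := Phi_coeff F 0 q1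
    rw [h0] at hpc
    simp only [Polynomial.coeff_zero, Finsupp.single_zero, zero_add] at hpc
    exact hFy hpc.symm
  have hFne : Phi F ≠ 0 := fun h0 => hFq1ne (by rw [h0]; simp)
  have hdegF : (Phi F).natDegree = q1 :=
    le_antisymm (Polynomial.natDegree_le_iff_coeff_eq_zero.mpr hFhi)
      (Polynomial.le_natDegree_of_ne_zero hFq1ne)
  have hFy1hat : (Phi F).coeff (q1 - 1) = 0 := by
    ext i
    rw [Phi_coeff, Polynomial.coeff_zero]
    exact hFy1 i
  -- the (q1-1)-st y-coefficient of K vanishes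
  have hKq11 : K.coeff (q1 - 1) = 0 := by
    rcases eq_or_ne (Phi h) 0 with h0 | h0
    · rw [hK, h0, zero_mul, Polynomial.coeff_zero]
    · have hKdeg : K.natDegree ≤ q1 := by
        rw [Polynomial.natDegree_le_iff_coeff_eq_zero]
        intro N hN
        rw [hKcoeff N]
        refine Finset.sum_eq_zero fun d hd => ?_
        rw [Nat.choose_eq_zero_of_lt (lt_of_le_of_lt (hd1le d hd) hN)]
        simp
      have e : K.natDegree = (Phi h).natDegree + q1 := by
        rw [hK, Polynomial.natDegree_mul h0 hFne, hdegF]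
      have hdeg0 : (Phi h).natDegree = 0 := by omega
      have hr := Polynomial.eq_C_of_natDegree_eq_zero hdeg0
      rw [hK, hr, Polynomial.coeff_C_mul, hFy1hat, mul_zero]
  -- extract: the y^(q1-1) coefficient of K is  c * q1 * α2^(q1-1) * p
  have hy1mem : Finsupp.single 1 q1 ∈ G.support := MvPolynomial.mem_support_iff.mpr hGy
  have hsum := hKcoeff (q1 - 1)
  rw [hKq11] at hsum
  have hside : ∀ d ∈ G.support, d ≠ Finsupp.single 1 q1 →
      Polynomial.C (G.coeff d) * q ^ (d 0) * (((d 1).choose (q1 - 1) : ℕ) : Polynomial ℂ) *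
        Polynomial.C α2 ^ (q1 - 1) * p ^ (d 1 - (q1 - 1)) = 0 := by
    intro d hd hne
    rcases lt_trichotomy (d 1) (q1 - 1) with hlt' | heq | hgt
    · rw [Nat.choose_eq_zero_of_lt hlt']; simp
    · exfalso
      have hde : d = Finsupp.single 0 (d 0) + Finsupp.single 1 (q1 - 1) :=
        (tw_fin2_eq_iff _ _ _).mpr ⟨rfl, heq⟩
      exact (MvPolynomial.mem_support_iff.mp hd) (hde ▸ hGy1 (d 0))
    · have hq1d : d 1 = q1 := by have := hd1le d hd; omega
      have hd0 : d 0 = 0 := by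
        have h1 := (hGsup d hd).1
        rw [hq1d, mul_comm q1 q2] at h1
        have h2 : q1 * d 0 ≤ 0 :=
          Nat.le_of_add_le_add_right (h1.trans_eq (zero_add (q2 * q1)).symm)
        rcases Nat.mul_eq_zero.mp (Nat.le_zero.mp h2) with h' | h'
        · omega
        · exact h'
      exfalso
      apply hne
      have e := (tw_fin2_eq_iff d 0 q1).mpr ⟨hd0, hq1d⟩
      simpa using e
  have hmain := (hsum.trans (Finset.sum_eq_single_of_mem (Finsupp.single 1 q1) hy1mem hside)).symm
  have hp0 : p = 0 := by
    rw [show ((Finsupp.single 1 q1 : Fin 2 →₀ ℕ) 0) = 0 by simp [Finsupp.single_apply],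
      show ((Finsupp.single 1 q1 : Fin 2 →₀ ℕ) 1) = q1 by simp] at hmain
    rw [pow_zero, mul_one, Nat.sub_sub_self hq1, pow_one,
      Nat.choose_symm hq1, Nat.choose_one_right] at hmain
    have h2 : ((q1 : ℕ) : Polynomial ℂ) ≠ 0 := Nat.cast_ne_zero.mpr hq1.ne'
    simpa [mul_eq_zero, Polynomial.C_eq_zero, hGy, hα2, h2] using hmain
  have hγ0 : ∀ i, γ i = 0 := by
    intro i
    have hc : p.coeff (i : ℕ) = γ i := by
      rw [hpdef, Polynomial.finset_sum_coeff]
      rw [Finset.sum_congr rfl (fun j _ => by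
        rw [Polynomial.coeff_C_mul, Polynomial.coeff_X_pow])]
      simp only [mul_ite, mul_one, mul_zero, Fin.val_eq_val]
      rw [Finset.sum_ite_eq Finset.univ i γ]
      simp
    rw [hp0] at hc
    simpa using hc.symm

  -- Step 2: β = 0
  have hx2mem : Finsupp.single 0 q2 ∈ G.support := MvPolynomial.mem_support_iff.mpr hGx
  have hq2pos : 0 < q2 := by omega
  -- the x^(q2-1) coefficient of the constant (in y) term of K
  have hside2 : ∀ d ∈ G.support, d ≠ Finsupp.single 0 q2 →
      (Polynomial.C (G.coeff d) * q ^ (d 0) * (((d 1).choose 0 : ℕ) : Polynomial ℂ) *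
        Polynomial.C α2 ^ 0 * p ^ (d 1 - 0)).coeff (q2 - 1) = 0 := by
    intro d hd hne
    by_cases hd1 : d 1 = 0
    · have hde : d = Finsupp.single 0 (d 0) := by
        have e := (tw_fin2_eq_iff d (d 0) 0).mpr ⟨rfl, hd1⟩
        simpa using e
      have hle := hd0le d hd
      rcases eq_or_lt_of_le hle with heq | hlt'
      · exact absurd (by rw [hde, heq]) hne
      · have hne' : d 0 ≠ q2 - 1 := by
          intro e
          exact (MvPolynomial.mem_support_iff.mp hd) (by rw [hde, e]; exact hGx1)
        have hlt2 : d 0 < q2 - 1 := by omega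
        rw [hd1]
        simp only [Nat.choose_zero_right, Nat.cast_one, mul_one, pow_zero, Nat.sub_zero]
        rw [Polynomial.coeff_C_mul, hqdef, tw_coeff_pow, Nat.choose_eq_zero_of_lt hlt2]
        simp
    · rw [Nat.sub_zero, hp0, zero_pow hd1]
      simp
  have hsum2 := congrArg (fun r : Polynomial ℂ => r.coeff (q2 - 1)) (hKcoeff 0)
  simp only [Polynomial.finset_sum_coeff] at hsum2
  have hmain2 : (Polynomial.C (G.coeff (Finsupp.single 0 q2)) *
      q ^ ((Finsupp.single 0 q2 : Fin 2 →₀ ℕ) 0) *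
      ((((Finsupp.single 0 q2 : Fin 2 →₀ ℕ) 1).choose 0 : ℕ) : Polynomial ℂ) *
      Polynomial.C α2 ^ 0 *
      p ^ ((Finsupp.single 0 q2 : Fin 2 →₀ ℕ) 1 - 0)).coeff (q2 - 1) = (K.coeff 0).coeff (q2 - 1) :=
    (hsum2.trans (Finset.sum_eq_single_of_mem (Finsupp.single 0 q2) hx2mem hside2)).symm
  rw [show ((Finsupp.single 0 q2 : Fin 2 →₀ ℕ) 0) = q2 by simp,
    show ((Finsupp.single 0 q2 : Fin 2 →₀ ℕ) 1) = 0 by simp [Finsupp.single_apply]] at hmain2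
  simp only [Nat.choose_zero_right, Nat.cast_one, mul_one, pow_zero, Nat.sub_zero] at hmain2
  rw [Polynomial.coeff_C_mul, hqdef, tw_coeff_pow, Nat.sub_sub_self hq2pos, pow_one,
    Nat.choose_symm hq2pos, Nat.choose_one_right] at hmain2
  -- the right-hand side vanishes
  have hK0z : (K.coeff 0).coeff (q2 - 1) = 0 := by
    rcases eq_or_ne ((Phi h).coeff 0) 0 with h0 | h0
    · rw [hK, Polynomial.mul_coeff_zero, h0, zero_mul, Polynomial.coeff_zero]
    · have hF0q2 : ((Phi F).coeff 0).coeff q2 ≠ 0 := by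
        rw [Phi_coeff]
        simpa using hFx
      have hF0ne : (Phi F).coeff 0 ≠ 0 := fun e => hF0q2 (by rw [e]; simp)
      have hF0hi : ∀ i : ℕ, q2 < i → ((Phi F).coeff 0).coeff i = 0 := by
        intro i hi
        rw [Phi_coeff]
        by_contra hc
        have hmem : (Finsupp.single 0 i + Finsupp.single 1 0) ∈ F.support :=
          MvPolynomial.mem_support_iff.mpr hc
        have h1 := (hFsup _ hmem).1
        have hi' : (Finsupp.single 0 i + Finsupp.single 1 0 : Fin 2 →₀ ℕ) 0 = i := by
          simp [Finsupp.single_apply]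
        have hi1 : (Finsupp.single 0 i + Finsupp.single 1 0 : Fin 2 →₀ ℕ) 1 = 0 := by
          simp [Finsupp.single_apply]
        rw [hi', hi1, mul_zero, add_zero] at h1
        have := Nat.le_of_mul_le_mul_left h1 hq1
        omega
      have hF0deg : ((Phi F).coeff 0).natDegree = q2 :=
        le_antisymm (Polynomial.natDegree_le_iff_coeff_eq_zero.mpr hF0hi)
          (Polynomial.le_natDegree_of_ne_zero hF0q2)
      have hK0deg : (K.coeff 0).natDegree ≤ q2 := by
        rw [Polynomial.natDegree_le_iff_coeff_eq_zero]
        intro N hN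
        rw [hKcoeff 0, Polynomial.finset_sum_coeff]
        refine Finset.sum_eq_zero fun d hd => ?_
        by_cases hd1 : d 1 = 0
        · rw [hd1]
          simp only [Nat.choose_zero_right, Nat.cast_one, mul_one, pow_zero, Nat.sub_zero]
          rw [Polynomial.coeff_C_mul, hqdef, tw_coeff_pow,
            Nat.choose_eq_zero_of_lt (lt_of_le_of_lt (hd0le d hd) hN)]
          simp
        · rw [Nat.sub_zero, hp0, zero_pow hd1]
          simp
      have e : (K.coeff 0).natDegree = ((Phi h).coeff 0).natDegree + q2 := by
        rw [hK, Polynomial.mul_coeff_zero, Polynomial.natDegree_mul h0 hF0ne, hF0deg]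
      have hdeg0 : ((Phi h).coeff 0).natDegree = 0 := by omega
      have hr := Polynomial.eq_C_of_natDegree_eq_zero hdeg0
      have hF0x1 : ((Phi F).coeff 0).coeff (q2 - 1) = 0 := by
        rw [Phi_coeff]
        simpa using hFx1
      rw [hK, Polynomial.mul_coeff_zero, hr, Polynomial.coeff_C_mul, hF0x1, mul_zero]
  rw [hK0z] at hmain2
  refine ⟨?_, hγ0⟩
  have hq2c : ((q2 : ℕ) : ℂ) ≠ 0 := Nat.cast_ne_zero.mpr hq2pos.ne'
  rcases mul_eq_zero.mp hmain2 with h' | h'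
  · exact absurd h' hGx
  · rcases mul_eq_zero.mp h' with h'' | h''
    · rcases mul_eq_zero.mp h'' with h3 | h3
      · exact absurd h3 hq2c
      · exact absurd h3 (pow_ne_zero _ hα1)
    · exact h''
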